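/- The invariant evolution system has no globally defined solution starting in the sector b > |a|: if a, b : ℝ → ℝ are differentiable on all of ℝ and satisfy a′(t) = (4/3)·a(t)² + 4·b(t)² and b′(t) = (16/3)·a(t)·b(t) for every t ∈ ℝ, then b(0) ≤ |a(0)|. -/

import Mathlib

open intervalIntegral Real Set

/-- A function satisfying a linear ODE `f' = g f` with continuous coefficient `g`
and positive initial value stays positive forever. -/
lemma pos_of_linear_ode (f g : ℝ → ℝ) (hg : Continuous g)
    (hf : ∀ t, HasDerivAt f (g t * f t) t) (h0 : 0 < f 0) : ∀ t, 0 < f t := by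
  set G : ℝ → ℝ := fun t => ∫ x in (0:ℝ)..t, g x with hGdef
  have hGd : ∀ t, HasDerivAt G (g t) t := by
    intro t
    exact intervalIntegral.integral_hasDerivAt_right (hg.intervalIntegrable _ _)
      (hg.stronglyMeasurableAtFilter _ _) hg.continuousAt
  set F : ℝ → ℝ := fun t => Real.exp (-(G t)) * f t with hFdef
  have hFd : ∀ t, HasDerivAt F 0 t := by
    intro t
    have h1 : HasDerivAt (fun t => Real.exp (-(G t))) (Real.exp (-(G t)) * (-(g t))) t :=
      ((hGd t).neg).exp
    have h2 := h1.mul (hf t)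
    exact h2.congr_deriv (by ring)
  have hconst : ∀ t, F t = F 0 := by
    intro t
    exact is_const_of_deriv_eq_zero (fun x => (hFd x).differentiableAt)
      (fun x => (hFd x).deriv) t 0
  intro t
  have h1 : 0 < F t := by
    rw [hconst t]
    have : G 0 = 0 := by simp [hGdef]
    simp only [hFdef, this, neg_zero, Real.exp_zero, one_mul]
    exact h0
  have h2 : 0 < Real.exp (-(G t)) := Real.exp_pos _
  have h3 : F t = Real.exp (-(G t)) * f t := rfl
  nlinarith [h1, h2]

/-- The invariant evolution system has no globally defined solution starting in
the sector `b > |a|`: a global solution on all of `ℝ` must have `b(0) ≤ |a(0)|`. -/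
theorem no_global_solution_in_sector (a b : ℝ → ℝ)
    (ha : ∀ t, HasDerivAt a ((4 / 3) * (a t) ^ 2 + 4 * (b t) ^ 2) t)
    (hb : ∀ t, HasDerivAt b ((16 / 3) * a t * b t) t) :
    b 0 ≤ |a 0| := by
  by_contra hcon
  push_neg at hcon
  obtain ⟨hc1, hc2⟩ := abs_lt.mp hcon
  have hca : Continuous a := continuous_iff_continuousAt.mpr fun t => (ha t).continuousAt
  have hcb : Continuous b := continuous_iff_continuousAt.mpr fun t => (hb t).continuousAt
  -- u = b - a stays positive
  have hu : ∀ t, HasDerivAt (fun t => b t - a t)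
      ((4/3 * a t - 4 * b t) * (b t - a t)) t := by
    intro t
    have h := (hb t).sub (ha t)
    exact h.congr_deriv (by ring)
  have hupos : ∀ t, 0 < b t - a t :=
    pos_of_linear_ode _ (fun t => 4/3 * a t - 4 * b t)
      (by continuity) hu (by linarith)
  -- w = a + b stays positive
  have hw : ∀ t, HasDerivAt (fun t => a t + b t)
      ((4/3 * a t + 4 * b t) * (a t + b t)) t := by
    intro t
    have h := (ha t).add (hb t)
    exact h.congr_deriv (by ring)
  have hwpos : ∀ t, 0 < a t + b t :=
    pos_of_linear_ode _ (fun t => 4/3 * a t + 4 * b t)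
      (by continuity) hw (by linarith)
  -- y = 1/w has derivative ≤ -8/3
  have hyd : ∀ t, HasDerivAt (fun t => (a t + b t)⁻¹)
      (-((4/3 * a t + 4 * b t) * (a t + b t)) / (a t + b t) ^ 2) t :=
    fun t => (hw t).inv (ne_of_gt (hwpos t))
  set T : ℝ := 3/8 * (a 0 + b 0)⁻¹ + 1 with hTdef
  have hT0 : 0 < T := by
    have := inv_pos.mpr (hwpos 0)
    positivity
  obtain ⟨c, _, hceq⟩ := exists_hasDerivAt_eq_slope (fun t => (a t + b t)⁻¹)
    (fun t => -((4/3 * a t + 4 * b t) * (a t + b t)) / (a t + b t) ^ 2) hT0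
    (fun x _ => ((hyd x).continuousAt).continuousWithinAt)
    (fun x _ => hyd x)
  have hbound : -((4/3 * a c + 4 * b c) * (a c + b c)) / (a c + b c) ^ 2 ≤ -(8/3) := by
    rw [div_le_iff₀ (pow_pos (hwpos c) 2)]
    nlinarith [mul_pos (hupos c) (hwpos c)]
  rw [hceq] at hbound
  have hslope : (a T + b T)⁻¹ - (a 0 + b 0)⁻¹ ≤ -(8/3) * (T - 0) := by
    rw [div_le_iff₀ (by linarith : (0:ℝ) < T - 0)] at hbound
    linarith
  have h1 : 0 < (a T + b T)⁻¹ := inv_pos.mpr (hwpos T)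
  have h2 : 0 < (a 0 + b 0)⁻¹ := inv_pos.mpr (hwpos 0)
  rw [hTdef] at hslope
  linarith
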